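/- Let C be a skew α-constacyclic code of odd-allowed length n over R with respect to θ_t of order k, where α is a unit of R fixed by θ_t with α² = 1. If gcd(n, k) = 1, then C is closed under the ordinary (non-skew) α-constacyclic shift (c₀,…,c_{n-1}) ↦ (αc_{n-1}, c₀,…,c_{n-2}); that is, C is an α-constacyclic code. -/

import Mathlib

/-- The ring `R = F + uF + vF` with `u² = u`, `v² = v`, `uv = vu = 0`,
represented as free `F`-module with basis `{1, u, v}`:
`⟨a, b, c⟩` stands for `a + u b + v c`. -/
@[ext] structure R3 (F : Type*) where
  a : F
  b : F
  c : F

namespace R3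

variable {F : Type*} [CommRing F]

instance : Zero (R3 F) := ⟨⟨0, 0, 0⟩⟩
instance : One (R3 F) := ⟨⟨1, 0, 0⟩⟩
instance : Add (R3 F) := ⟨fun x y => ⟨x.a + y.a, x.b + y.b, x.c + y.c⟩⟩
instance : Neg (R3 F) := ⟨fun x => ⟨-x.a, -x.b, -x.c⟩⟩
instance : Mul (R3 F) :=
  ⟨fun x y => ⟨x.a * y.a, x.a * y.b + x.b * y.a + x.b * y.b,
    x.a * y.c + x.c * y.a + x.c * y.c⟩⟩

@[simp] lemma zero_a : (0 : R3 F).a = 0 := rfl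
@[simp] lemma zero_b : (0 : R3 F).b = 0 := rfl
@[simp] lemma zero_c : (0 : R3 F).c = 0 := rfl
@[simp] lemma one_a : (1 : R3 F).a = 1 := rfl
@[simp] lemma one_b : (1 : R3 F).b = 0 := rfl
@[simp] lemma one_c : (1 : R3 F).c = 0 := rfl
@[simp] lemma add_a (x y : R3 F) : (x + y).a = x.a + y.a := rfl
@[simp] lemma add_b (x y : R3 F) : (x + y).b = x.b + y.b := rfl
@[simp] lemma add_c (x y : R3 F) : (x + y).c = x.c + y.c := rfl
@[simp] lemma neg_a (x : R3 F) : (-x).a = -x.a := rfl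
@[simp] lemma neg_b (x : R3 F) : (-x).b = -x.b := rfl
@[simp] lemma neg_c (x : R3 F) : (-x).c = -x.c := rfl
@[simp] lemma mul_a (x y : R3 F) : (x * y).a = x.a * y.a := rfl
@[simp] lemma mul_b (x y : R3 F) :
    (x * y).b = x.a * y.b + x.b * y.a + x.b * y.b := rfl
@[simp] lemma mul_c (x y : R3 F) :
    (x * y).c = x.a * y.c + x.c * y.a + x.c * y.c := rfl

instance : CommRing (R3 F) where
  add := (· + ·)
  zero := 0
  neg := Neg.neg
  mul := (· * ·)
  one := 1
  add_assoc x y z := by ext <;> simp <;> ring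
  zero_add x := by ext <;> simp
  add_zero x := by ext <;> simp
  add_comm x y := by ext <;> simp <;> ring
  neg_add_cancel x := by ext <;> simp
  mul_assoc x y z := by ext <;> simp <;> ring
  one_mul x := by ext <;> simp
  mul_one x := by ext <;> simp
  left_distrib x y z := by ext <;> simp <;> ring
  right_distrib x y z := by ext <;> simp <;> ring
  zero_mul x := by ext <;> simp
  mul_zero x := by ext <;> simp
  mul_comm x y := by ext <;> simp <;> ring
  nsmul := nsmulRec
  zsmul := zsmulRec

/-- the element `u` -/
def u : R3 F := ⟨0, 1, 0⟩
/-- the element `v` -/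
def v : R3 F := ⟨0, 0, 1⟩
/-- the canonical embedding of `F` into `R3 F` -/
def ofF (x : F) : R3 F := ⟨x, 0, 0⟩

instance : SMul F (R3 F) := ⟨fun r x => ⟨r * x.a, r * x.b, r * x.c⟩⟩

@[simp] lemma smul_a (r : F) (x : R3 F) : (r • x).a = r * x.a := rfl
@[simp] lemma smul_b (r : F) (x : R3 F) : (r • x).b = r * x.b := rfl
@[simp] lemma smul_c (r : F) (x : R3 F) : (r • x).c = r * x.c := rfl

instance : Module F (R3 F) where
  one_smul x := by ext <;> simp
  mul_smul r s x := by ext <;> simp <;> ring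
  smul_zero r := by ext <;> simp
  smul_add r x y := by ext <;> simp <;> ring
  add_smul r s x := by ext <;> simp <;> ring
  zero_smul x := by ext <;> simp

instance [Fintype F] : Fintype (R3 F) :=
  Fintype.ofEquiv (F × F × F)
    { toFun := fun t => ⟨t.1, t.2.1, t.2.2⟩
      invFun := fun x => (x.a, x.b, x.c)
      left_inv := fun _ => rfl
      right_inv := fun _ => rfl }

/-- the componentwise extension to `R3 F` of a map `σ : F → F`:
`a + u b + v c ↦ σ a + u (σ b) + v (σ c)`. -/
def lift (σ : F → F) : R3 F → R3 F := fun x => ⟨σ x.a, σ x.b, σ x.c⟩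

/-- the Gray map `a + u b + v c ↦ (a, a + b, a + c)`. -/
def gray (x : R3 F) : F × F × F := (x.a, x.a + x.b, x.a + x.c)

/-- the Gray map applied componentwise to vectors, with the three blocks
of length `n` arranged as a triple. -/
def grayV {n : ℕ} (x : Fin n → R3 F) :
    (Fin n → F) × (Fin n → F) × (Fin n → F) :=
  (fun i => (x i).a, fun i => (x i).a + (x i).b, fun i => (x i).a + (x i).c)

end R3

/-- the skew `α`-constacyclic shift `(c₀, …, c_{n-1}) ↦ (α θ(c_{n-1}), θ(c₀), …, θ(c_{n-2}))`
over a ring `R` with respect to a map `θ : R → R`. -/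
def tauShift {R : Type*} [Ring R] {n : ℕ} [NeZero n] (θ : R → R) (α : R)
    (c : Fin n → R) : Fin n → R :=
  fun i => (if i = 0 then α else 1) * θ (c (i - 1))

/-- first component code `C₁ = {a : a + u b + v c ∈ C}` of a code over `R3 F`. -/
def comp1 {F : Type*} [CommRing F] {n : ℕ} (C : Set (Fin n → R3 F)) :
    Set (Fin n → F) :=
  {y | ∃ x ∈ C, y = fun i => (x i).a}

/-- second component code `C₂ = {a + b : a + u b + v c ∈ C}`. -/
def comp2 {F : Type*} [CommRing F] {n : ℕ} (C : Set (Fin n → R3 F)) :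
    Set (Fin n → F) :=
  {y | ∃ x ∈ C, y = fun i => (x i).a + (x i).b}

/-- third component code `C₃ = {a + c : a + u b + v c ∈ C}`. -/
def comp3 {F : Type*} [CommRing F] {n : ℕ} (C : Set (Fin n → R3 F)) :
    Set (Fin n → F) :=
  {y | ∃ x ∈ C, y = fun i => (x i).a + (x i).c}

/-- Euclidean dual of a code over a commutative ring. -/
def dualCode {R : Type*} [CommRing R] {n : ℕ} (C : Set (Fin n → R)) :
    Set (Fin n → R) :=
  {x | ∀ y ∈ C, ∑ i, x i * y i = 0}

/-- Euclidean dual of a code of length `3n` over `F`, written as triples of blocks. -/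
def dualCode3 {F : Type*} [CommRing F] {n : ℕ}
    (S : Set ((Fin n → F) × (Fin n → F) × (Fin n → F))) :
    Set ((Fin n → F) × (Fin n → F) × (Fin n → F)) :=
  {x | ∀ y ∈ S,
    (∑ i, x.1 i * y.1 i) + (∑ i, x.2.1 i * y.2.1 i) + (∑ i, x.2.2 i * y.2.2 i) = 0}

/-- multiplication in the skew polynomial ring `R[x;θ]`, determined by
`a xⁱ * b xʲ = a θⁱ(b) x^{i+j}`. -/
noncomputable def skewMul {R : Type*} [CommRing R] (θ : R → R)
    (f g : Polynomial R) : Polynomial R :=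
  ∑ i ∈ f.support, ∑ j ∈ g.support,
    Polynomial.C (f.coeff i * θ^[i] (g.coeff j)) * Polynomial.X ^ (i + j)

/-- `f ≡ g` modulo the left ideal generated by `d` in the skew polynomial ring. -/
noncomputable def sModEq {R : Type*} [CommRing R] (θ : R → R)
    (d f g : Polynomial R) : Prop :=
  ∃ h, f - g = skewMul θ h d

/-- the substitution map `f(x) ↦ f(αx)` (with `θ(α) = α`, so `(αx)ⁱ = αⁱxⁱ`). -/
noncomputable def rhoMap {R : Type*} [CommRing R] (α : R) (f : Polynomial R) :
    Polynomial R :=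
  ∑ i ∈ f.support, Polynomial.C (f.coeff i * α ^ i) * Polynomial.X ^ i

open R3 in
/-- if `gcd(n,k) = 1`, a skew `α`-constacyclic code over `R` (with `α² = 1`,
`α` fixed by `θ_t` of order `k = m/t`) is closed under the ordinary `α`-constacyclic
shift, i.e. it is an `α`-constacyclic code. -/
theorem stmt17 (p m t k n : ℕ) (hp : Nat.Prime p) (hpodd : Odd p)
    (F : Type*) [Field F] [Fintype F] (hcard : Fintype.card F = p ^ m)
    (ht : t ∣ m) (htpos : 0 < t) (hk : k = m / t) [NeZero n]
    (α : R3 F) (hαsq : α ^ 2 = 1) (hαunit : IsUnit α)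
    (hαfix : R3.lift (fun a : F => a ^ p ^ t) α = α)
    (C : Submodule (R3 F) (Fin n → R3 F))
    (hC : tauShift (R3.lift (fun a : F => a ^ p ^ t)) α ''
        (C : Set (Fin n → R3 F)) = (C : Set (Fin n → R3 F)))
    (hgcd : Nat.gcd n k = 1) :
    ∀ cw ∈ C, (fun i : Fin n => (if i = 0 then α else 1) * cw (i - 1)) ∈ C := by
  classical
  -- abbreviations
  set f : F → F := fun a : F => a ^ p ^ t with hf
  set θ : R3 F → R3 F := R3.lift f with hθdef
  set τ : (Fin n → R3 F) → (Fin n → R3 F) := tauShift θ α with hτdef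
  have hnpos : 0 < n := Nat.pos_of_ne_zero (NeZero.ne n)
  -- characteristic
  have hm : 0 < m := by
    rcases Nat.eq_zero_or_pos m with h | h
    · rw [h, pow_zero] at hcard
      have := Fintype.one_lt_card (α := F)
      omega
    · exact h
  have hkpos : 0 < k := by
    rw [hk]
    exact Nat.div_pos (Nat.le_of_dvd hm ht) htpos
  haveI : NeZero k := ⟨hkpos.ne'⟩
  haveI : Fact p.Prime := ⟨hp⟩
  obtain ⟨n', hrprime, hcard'⟩ := FiniteField.card F (ringChar F)
  have hpr : p = ringChar F := by
    have h1 : p ∣ ringChar F ^ (n' : ℕ) := by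
      rw [← hcard', hcard]
      exact dvd_pow_self p hm.ne'
    exact (Nat.prime_dvd_prime_iff_eq hp hrprime).mp (hp.dvd_of_dvd_pow h1)
  haveI hcharp : CharP F p := hpr ▸ ringChar.charP F
  -- basic facts about f
  have fadd : ∀ a b : F, f (a + b) = f a + f b := fun a b => add_pow_char_pow a b p t
  have fmul : ∀ a b : F, f (a * b) = f a * f b := fun a b => mul_pow a b (p ^ t)
  have hpt : p ^ t ≠ 0 := (pow_pos hp.pos t).ne'
  -- θ is multiplicative and fixes 1 and α
  have θmul : ∀ x y : R3 F, θ (x * y) = θ x * θ y := by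
    intro x y
    ext <;> simp [hθdef, R3.lift, fadd, fmul]
  have θone : θ 1 = 1 := by
    ext <;> simp [hθdef, R3.lift, hf, hpt, hp.ne_zero]
  have θα : θ α = α := hαfix
  have θαx : ∀ x, θ (α * x) = α * θ x := by
    intro x; rw [θmul, θα]
  have θαpow : ∀ (q' : ℕ) (x), θ (α ^ q' * x) = α ^ q' * θ x := by
    intro q'
    induction q' with
    | zero => intro x; simp
    | succ q' ih =>
      intro x
      have h1 : α ^ (q' + 1) * x = α * (α ^ q' * x) := by ring
      rw [h1, θαx, ih]
      ring
  have θiterαpow : ∀ (j q' : ℕ) (x), θ^[j] (α ^ q' * x) = α ^ q' * θ^[j] x := by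
    intro j q'
    induction j with
    | zero => intro x; simp
    | succ j ih =>
      intro x
      rw [Function.iterate_succ_apply, θαpow, ih, ← Function.iterate_succ_apply]
  -- iterates of θ as lifts of iterates of f
  have liftIter : ∀ (j : ℕ) (x : R3 F), θ^[j] x = R3.lift f^[j] x := by
    intro j
    induction j with
    | zero => intro x; rfl
    | succ j ih =>
      intro x
      rw [Function.iterate_succ_apply, ih]
      ext <;> exact (Function.iterate_succ_apply f j _).symm
  have fiterpow : ∀ (j : ℕ) (a : F), f^[j] a = a ^ (p ^ t) ^ j := by
    intro j
    induction j with
    | zero => intro a; simp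
    | succ j ih =>
      intro a
      rw [Function.iterate_succ_apply']
      show (f^[j] a) ^ p ^ t = _
      rw [ih, ← pow_mul, ← pow_succ]
  have ftk : t * k = m := by rw [hk]; exact Nat.mul_div_cancel' ht
  have fiterk : ∀ a : F, f^[k] a = a := by
    intro a
    rw [fiterpow, ← pow_mul, ftk, ← hcard]
    exact FiniteField.pow_card a
  have θiterk : ∀ x : R3 F, θ^[k] x = x := by
    intro x
    rw [liftIter]
    ext <;> simp [R3.lift, fiterk]
  have θiterdvd : ∀ (M : ℕ), k ∣ M → ∀ x : R3 F, θ^[M] x = x := by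
    rintro M ⟨s, rfl⟩ x
    rw [Function.iterate_mul]
    induction s with
    | zero => simp
    | succ s ih =>
      rw [Function.iterate_succ_apply', ih]
      exact θiterk _
  -- closure of C under τ
  have τmem : ∀ x ∈ C, τ x ∈ C := by
    intro x hx
    have : τ x ∈ τ '' (C : Set (Fin n → R3 F)) := Set.mem_image_of_mem τ hx
    rwa [hτdef, hC] at this
  have τitermem : ∀ (M : ℕ) (x), x ∈ C → τ^[M] x ∈ C := by
    intro M
    induction M with
    | zero => intro x hx; exact hx
    | succ M ih =>
      intro x hx
      rw [Function.iterate_succ_apply]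
      exact ih _ (τmem x hx)
  -- the key formula for τ^[j], j ≤ n
  have coe_sub_one : ∀ i : Fin n, ((i - 1 : Fin n) : ℕ) = if i = 0 then n - 1 else (i : ℕ) - 1 := by
    intro i
    rcases n with _ | n'
    · exact absurd rfl (NeZero.ne 0)
    · exact Fin.coe_sub_one i
  open Fin.NatCast in
  have formula : ∀ j : ℕ, j ≤ n → ∀ d : Fin n → R3 F,
      τ^[j] d = fun i : Fin n => (if (i : ℕ) < j then α else 1) * θ^[j] (d (i - (j : Fin n))) := by
    intro j
    induction j with
    | zero => intro _ d; funext i; simp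
    | succ j ih =>
      intro hjn d
      funext i
      rw [Function.iterate_succ_apply', ih (Nat.le_of_succ_le hjn)]
      show (if i = 0 then α else 1) * θ ((if (((i - 1 : Fin n) : ℕ)) < j then α else 1)
          * θ^[j] (d (i - 1 - (j : Fin n)))) = _
      have hidx : i - 1 - (j : Fin n) = i - ((j + 1 : ℕ) : Fin n) := by
        push_cast
        abel
      rw [θmul, hidx, ← Function.iterate_succ_apply' θ j]
      have hθif : θ (if (((i - 1 : Fin n) : ℕ)) < j then α else 1)
          = (if (((i - 1 : Fin n) : ℕ)) < j then α else 1) := by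
        split <;> [exact θα; exact θone]
      rw [hθif, ← mul_assoc]
      congr 1
      by_cases h0 : i = 0
      · subst h0
        have h1 : (((0 - 1 : Fin n) : ℕ)) = n - 1 := by rw [coe_sub_one]; simp
        rw [h1]
        have : ¬ (n - 1 < j) := by omega
        simp [this]
      · have hv0 : (i : ℕ) ≠ 0 := by
          exact Fin.val_ne_zero_iff.mpr h0
        have h1 : (((i - 1 : Fin n) : ℕ)) = (i : ℕ) - 1 := by rw [coe_sub_one]; simp [h0]
        rw [h1, if_neg h0, one_mul]
        have : ((i : ℕ) - 1 < j) ↔ ((i : ℕ) < j + 1) := by omega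
        simp [this]
  -- full cycle
  open Fin.NatCast in
  have cycle : ∀ d : Fin n → R3 F, τ^[n] d = fun i => α * θ^[n] (d i) := by
    intro d
    rw [formula n le_rfl d]
    funext i
    simp [i.isLt, Fin.natCast_self]
  -- iterated full cycles
  have cycles : ∀ (q' : ℕ) (d : Fin n → R3 F),
      τ^[q' * n] d = fun i => α ^ q' * θ^[q' * n] (d i) := by
    intro q'
    induction q' with
    | zero => intro d; funext i; simp
    | succ q' ih =>
      intro d
      have h1 : (q' + 1) * n = q' * n + n := by ring
      rw [h1, Function.iterate_add_apply, ih (τ^[n] d)]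
      funext i
      rw [cycle d]
      show α ^ q' * θ^[q' * n] (α * θ^[n] (d i)) = _
      rw [show (α * θ^[n] (d i)) = α ^ 1 * θ^[n] (d i) by rw [pow_one],
        θiterαpow, ← Function.iterate_add_apply, pow_one, ← mul_assoc, ← pow_succ]
  -- choose q with k ∣ q * n + 1
  have hcop : Nat.Coprime n k := hgcd
  set q : ℕ := (-(n : ZMod k)⁻¹).val with hq
  have hdvd : k ∣ q * n + 1 := by
    have hcast : ((q * n + 1 : ℕ) : ZMod k) = 0 := by
      push_cast
      rw [hq, ZMod.natCast_zmod_val]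
      have h1 : (n : ZMod k) * (n : ZMod k)⁻¹ = 1 := ZMod.coe_mul_inv_eq_one n hcop
      rw [neg_mul, mul_comm ((n : ZMod k)⁻¹) (n : ZMod k), h1]
      ring
    exact (ZMod.natCast_eq_zero_iff _ _).mp hcast
  -- the final assembly
  intro cw hcw
  have hmemN : τ^[q * n + 1] cw ∈ C := τitermem _ _ hcw
  have hθN : ∀ x : R3 F, θ^[q * n + 1] x = x := θiterdvd _ hdvd
  have keyval : ∀ i : Fin n,
      τ^[q * n + 1] cw i = α ^ q * ((if i = 0 then α else 1) * cw (i - 1)) := by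
    intro i
    rw [Function.iterate_succ_apply', cycles q cw]
    show (if i = 0 then α else 1) * θ (α ^ q * θ^[q * n] (cw (i - 1))) = _
    rw [θαpow, ← Function.iterate_succ_apply' θ (q * n), hθN]
    ring
  have hsq : α ^ q * α ^ q = 1 := by
    rw [← pow_add, ← two_mul, pow_mul, hαsq, one_pow]
  have heq : (fun i : Fin n => (if i = 0 then α else 1) * cw (i - 1))
      = α ^ q • τ^[q * n + 1] cw := by
    funext i
    rw [Pi.smul_apply, smul_eq_mul, keyval, ← mul_assoc, hsq, one_mul]
  rw [heq]
  exact C.smul_mem _ hmemN
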